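/- arXiv:2112.13847 — 4 statements merged into one kernel-verified Lean document; each statement's English description precedes it below -/
import Mathlib

section
/- Let V be a type, S a finite set of edges (Finset (Sym2 V)), and let l be an edge-simple path (nonempty duplicate-free list of edges in which every two consecutive entries share a vertex) all of whose edges lie in S, with first edge v and last edge u. Then for every natural number k with 1 ≤ k ≤ S.card, there exist a subset S' ⊆ S with S'.card = k, an edge y ∈ S', and edge-simple paths l₁ and l₂ such that: every edge of l₁ lies in S', l₁ has first edge v and last edge y; every edge of l₂ lies in (S \ S') ∪ {y}, l₂ has first edge y and last edge u; and l₁.length + l₂.length − 1 = l.length. -/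
/-- Two edges share a vertex. -/
def SharesVertex {V : Type*} (e f : Sym2 V) : Prop := ∃ x, x ∈ e ∧ x ∈ f

/-- An edge-simple path (trail): a nonempty duplicate-free list of edges in which
every two consecutive entries share a vertex. -/
def IsTrail {V : Type*} (l : List (Sym2 V)) : Prop :=
  l ≠ [] ∧ l.Nodup ∧ l.Chain' (fun e f => ∃ x, x ∈ e ∧ x ∈ f)

theorem split_trail {V : Type*} [DecidableEq V] (S : Finset (Sym2 V)) (v u : Sym2 V)
    (l : List (Sym2 V)) (hl : IsTrail l) (hlS : ∀ e ∈ l, e ∈ S)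
    (hhead : l.head? = some v) (hlast : l.getLast? = some u)
    (k : ℕ) (hk1 : 1 ≤ k) (hk2 : k ≤ S.card) :
    ∃ S' ⊆ S, S'.card = k ∧ ∃ y ∈ S', ∃ l₁ l₂ : List (Sym2 V),
      IsTrail l₁ ∧ (∀ e ∈ l₁, e ∈ S') ∧
        l₁.head? = some v ∧ l₁.getLast? = some y ∧
      IsTrail l₂ ∧ (∀ e ∈ l₂, e ∈ (S \ S') ∪ {y}) ∧
        l₂.head? = some y ∧ l₂.getLast? = some u ∧
      l₁.length + l₂.length - 1 = l.length := by
  obtain ⟨hne, hnd, hch⟩ := hl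
  set n := l.length with hn
  have hn1 : 1 ≤ n := List.length_pos_iff.mpr hne
  set j := min k n with hj
  have hj1 : 1 ≤ j := le_min hk1 hn1
  have hjn : j ≤ n := min_le_right _ _
  have hjm : j - 1 < n := by omega
  -- the list's edges as a finset
  have hlF : l.toFinset ⊆ S := fun e he => hlS e (List.mem_toFinset.mp he)
  have hlFcard : l.toFinset.card = n := by
    rw [List.toFinset_card_of_nodup hnd]
  have hnS : n ≤ S.card := hlFcard ▸ Finset.card_le_card hlF
  -- extras
  have hextra : k - j ≤ (S \ l.toFinset).card := by
    rw [Finset.card_sdiff_of_subset hlF, hlFcard]; omega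
  obtain ⟨t, htsub, htcard⟩ := Finset.exists_subset_card_eq hextra
  set l₁ := l.take j with hl₁
  set l₂ := l.drop (j - 1) with hl₂
  have hlen₁ : l₁.length = j := by simp [hl₁, hjn]; exact hjn
  have hlen₂ : l₂.length = n - (j - 1) := by simp [hl₂]; rfl
  set y := l[j - 1]'hjm with hy
  set S' : Finset (Sym2 V) := l₁.toFinset ∪ t with hS'
  have htdisj : Disjoint l₁.toFinset t := by
    refine Finset.disjoint_left.mpr fun e he het => ?_
    have : e ∈ S \ l.toFinset := htsub het
    have : e ∉ l.toFinset := (Finset.mem_sdiff.mp this).2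
    exact this (List.mem_toFinset.mpr (List.mem_of_mem_take (List.mem_toFinset.mp he)))
  have hnd₁ : l₁.Nodup := (List.take_sublist j l).nodup hnd
  have hS'sub : S' ⊆ S := by
    refine Finset.union_subset (fun e he => ?_) (htsub.trans (Finset.sdiff_subset))
    exact hlS e (List.mem_of_mem_take (List.mem_toFinset.mp he))
  have hS'card : S'.card = k := by
    rw [hS', Finset.card_union_of_disjoint htdisj, htcard,
      List.toFinset_card_of_nodup hnd₁, hlen₁]
    omega
  have hyl₁ : y ∈ l₁ := by
    have : l₁[j-1]'(by omega) = y := by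
      simp [hl₁, List.getElem_take, hy]
    exact this ▸ List.getElem_mem _
  have hyS' : y ∈ S' := Finset.mem_union_left _ (List.mem_toFinset.mpr hyl₁)
  -- disjointness of take j and drop j
  have hdisj : ∀ e ∈ l₁, e ∉ l.drop j := by
    have h := hnd
    rw [← List.take_append_drop j l, List.nodup_append] at h
    exact fun e he he' => h.2.2 e he e he' rfl
  have hcons : l₂ = y :: l.drop j := by
    rw [hl₂, List.drop_eq_getElem_cons hjm, show j - 1 + 1 = j by omega]
  refine ⟨S', hS'sub, hS'card, y, hyS', l₁, l₂, ?_, ?_, ?_, ?_, ?_, ?_, ?_, ?_, ?_⟩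
  · exact ⟨by rw [← List.length_pos_iff, hlen₁]; omega, hnd₁, hch.take j⟩

  · exact fun e he => Finset.mem_union_left _ (List.mem_toFinset.mpr he)
  · rw [List.head?_eq_getElem?, hl₁, List.getElem?_take, if_pos (by omega : 0 < j),
      ← List.head?_eq_getElem?]
    exact hhead
  · rw [List.getLast?_eq_getElem?, hlen₁, hl₁,
      List.getElem?_take, if_pos (by omega : j - 1 < j), List.getElem?_eq_getElem hjm]
  · refine ⟨by rw [← List.length_pos_iff, hlen₂]; exact Nat.sub_pos_of_lt hjm,
      (List.drop_sublist _ l).nodup hnd,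
      hch.drop _⟩
  · intro e he
    rw [hcons] at he
    rcases List.mem_cons.mp he with rfl | he'
    · exact Finset.mem_union_right _ (Finset.mem_singleton_self _)
    · refine Finset.mem_union_left _ (Finset.mem_sdiff.mpr ⟨hlS e (List.mem_of_mem_drop he'), ?_⟩)
      rw [hS', Finset.mem_union]
      rintro (h1 | h2)
      · exact hdisj e (List.mem_toFinset.mp h1) he'
      · exact (Finset.mem_sdiff.mp (htsub h2)).2
          (List.mem_toFinset.mpr (List.mem_of_mem_drop he'))
  · rw [List.head?_eq_getElem?, hl₂, List.getElem?_drop, Nat.add_zero,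
      List.getElem?_eq_getElem hjm]
  · rw [List.getLast?_eq_getElem?, hlen₂, hl₂, List.getElem?_drop,
      show j - 1 + (n - (j-1) - 1) = n - 1 by omega]
    rw [List.getLast?_eq_getElem?] at hlast
    exact hlast
  · rw [hlen₁, hlen₂]; omega
end

section
/- Let V be a type and S a finite set of edges (Finset (Sym2 V)). For a set T of edges and edges v, u define L(T,v,u) := sSup {n : ℕ | ∃ edge-simple path l with all edges of l in T, first edge v, last edge u, and l.length = n}. Suppose v, u ∈ S, k is a natural number with 1 ≤ k ≤ S.card, and there exists at least one edge-simple path all of whose edges lie in S with first edge v and last edge u. Then L(S,v,u) = sSup {n : ℕ | ∃ S' ⊆ S with S'.card = k, ∃ y ∈ S', ∃ edge-simple paths l₁, l₂ such that all edges of l₁ lie in S' with first edge v and last edge y, all edges of l₂ lie in (S \ S') ∪ {y} with first edge y and last edge u, and n = l₁.length + l₂.length − 1}. -/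
/-- `L T v u` is the length of the longest edge-simple path using only edges
from `T`, starting at edge `v` and finishing at edge `u`. -/
noncomputable def L {V : Type*} (T : Set (Sym2 V)) (v u : Sym2 V) : ℕ :=
  sSup {n : ℕ | ∃ l : List (Sym2 V), IsTrail l ∧ (∀ e ∈ l, e ∈ T) ∧
    l.head? = some v ∧ l.getLast? = some u ∧ l.length = n}

theorem L_split {V : Type*} [DecidableEq V] (S : Finset (Sym2 V)) (v u : Sym2 V)
    (hv : v ∈ S) (hu : u ∈ S) (k : ℕ) (hk1 : 1 ≤ k) (hk2 : k ≤ S.card)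
    (hex : ∃ l : List (Sym2 V), IsTrail l ∧ (∀ e ∈ l, e ∈ S) ∧
      l.head? = some v ∧ l.getLast? = some u) :
    L (↑S : Set (Sym2 V)) v u =
      sSup {n : ℕ | ∃ S' ⊆ S, S'.card = k ∧ ∃ y ∈ S', ∃ l₁ l₂ : List (Sym2 V),
        IsTrail l₁ ∧ (∀ e ∈ l₁, e ∈ S') ∧
          l₁.head? = some v ∧ l₁.getLast? = some y ∧
        IsTrail l₂ ∧ (∀ e ∈ l₂, e ∈ (S \ S') ∪ {y}) ∧
          l₂.head? = some y ∧ l₂.getLast? = some u ∧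
        n = l₁.length + l₂.length - 1} := by
  unfold L
  congr 1
  ext n
  simp only [Set.mem_setOf_eq]
  constructor
  · rintro ⟨l, ⟨hne, hnd, hch⟩, hS, hhead, hlast, rfl⟩
    have hlpos : 0 < l.length := List.length_pos_iff.2 hne
    by_cases hkn : k ≤ l.length
    · -- split at position k
      have hk1' : k - 1 < l.length := by omega
      have hymem : l[k-1] ∈ l.take k := by
        have h1 : k - 1 < (l.take k).length := by
          rw [List.length_take]; omega
        have := List.getElem_mem h1
        rwa [List.getElem_take] at this
      refine ⟨(l.take k).toFinset, ?_, ?_, l[k-1], List.mem_toFinset.2 hymem,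
        l.take k, l.drop (k-1),
        ⟨?_, hnd.sublist (List.take_sublist _ _), hch.prefix (List.take_prefix _ _)⟩,
        ?_, ?_, ?_,
        ⟨?_, hnd.sublist (List.drop_sublist _ _), hch.suffix (List.drop_suffix _ _)⟩,
        ?_, ?_, ?_, ?_⟩
      · intro e he
        exact hS e (List.take_subset _ _ (List.mem_toFinset.1 he))
      · rw [List.toFinset_card_of_nodup (hnd.sublist (List.take_sublist _ _)),
          List.length_take]
        omega
      · rw [Ne, List.take_eq_nil_iff]
        push_neg
        exact ⟨by omega, hne⟩
      · intro e he; exact List.mem_toFinset.2 he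
      · rw [List.head?_eq_getElem?, List.getElem?_take, if_pos (by omega),
          ← List.head?_eq_getElem?, hhead]
      · rw [List.getLast?_take, if_neg (by omega), List.getElem?_eq_getElem hk1']
        rfl
      · rw [Ne, ← List.length_eq_zero_iff, List.length_drop]
        omega
      · intro e he
        have hd : l.drop (k-1) = l[k-1] :: l.drop k := by
          have hkk : k - 1 + 1 = k := by omega
          rw [List.drop_eq_getElem_cons hk1', hkk]
        rw [hd] at he
        rcases List.mem_cons.1 he with he' | he'
        · rw [he']
          exact Finset.mem_union_right _ (Finset.mem_singleton_self _)
        · refine Finset.mem_union_left _ (Finset.mem_sdiff.2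
            ⟨hS e (List.drop_subset _ _ he'), ?_⟩)
          intro hmem
          have hdisj := (List.nodup_append.1 (by rw [List.take_append_drop]; exact hnd :
            (l.take k ++ l.drop k).Nodup)).2.2
          exact hdisj e (List.mem_toFinset.1 hmem) e he' rfl
      · rw [List.head?_drop, List.getElem?_eq_getElem hk1']
      · have h' : k - 1 + (l.length - (k - 1) - 1) = l.length - 1 := by omega
        rw [List.getLast?_eq_getElem?, List.length_drop, List.getElem?_drop, h']
        rw [List.getLast?_eq_getElem?] at hlast
        exact hlast
      · rw [List.length_take, List.length_drop]
        omega
    · -- l is shorter than k: extend the edge set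
      have hcard : l.toFinset.card = l.length := List.toFinset_card_of_nodup hnd
      have hsub : l.toFinset ⊆ S := fun e he => hS e (List.mem_toFinset.1 he)
      obtain ⟨S', hsub1, hsub2, hcard'⟩ :=
        Finset.exists_subsuperset_card_eq hsub (by omega) hk2
      have humem : u ∈ l := List.mem_of_mem_getLast? hlast
      refine ⟨S', hsub2, hcard', u, hsub1 (List.mem_toFinset.2 humem), l, [u],
        ⟨hne, hnd, hch⟩, fun e he => hsub1 (List.mem_toFinset.2 he), hhead, hlast,
        ⟨by simp, by simp, List.isChain_singleton _⟩, ?_, rfl, rfl, by simp⟩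
      intro e he
      rw [List.mem_singleton] at he
      subst he
      exact Finset.mem_union_right _ (Finset.mem_singleton_self _)
  · rintro ⟨S', hS'S, hcard, y, hyS', l₁, l₂, ⟨h1ne, h1nd, h1ch⟩, h1S, h1h, h1l,
      ⟨h2ne, h2nd, h2ch⟩, h2S, h2h, h2l, rfl⟩
    obtain ⟨a, t, rfl⟩ := List.exists_cons_of_ne_nil h2ne
    obtain rfl : a = y := by simpa using h2h
    -- note: `y` has been substituted by `a`
    have htS : ∀ e ∈ t, e ∈ S ∧ e ∉ S' := by
      intro e he
      have h := h2S e (List.mem_cons_of_mem _ he)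
      have hey : e ≠ a := fun h' => (List.nodup_cons.1 h2nd).1 (h' ▸ he)
      rcases Finset.mem_union.1 h with h' | h'
      · exact ⟨(Finset.mem_sdiff.1 h').1, (Finset.mem_sdiff.1 h').2⟩
      · exact absurd (Finset.mem_singleton.1 h') hey
    refine ⟨l₁ ++ t, ⟨?_, ?_, ?_⟩, ?_, ?_, ?_, ?_⟩
    · simp [h1ne]
    · refine List.nodup_append.2 ⟨h1nd, (List.nodup_cons.1 h2nd).2, ?_⟩
      intro e he1 b he2 heb
      subst heb
      exact (htS e he2).2 (h1S e he1)
    · refine List.isChain_append.2 ⟨h1ch, h2ch.tail, ?_⟩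
      intro x hx b hb
      rw [h1l] at hx
      obtain rfl : a = x := by simpa using hx
      exact (List.isChain_cons.1 h2ch).1 b hb
    · intro e he
      rcases List.mem_append.1 he with he' | he'
      · exact hS'S (h1S e he')
      · exact (htS e he').1
    · rw [List.head?_append, h1h]; rfl
    · rcases eq_or_ne t [] with rfl | htne
      · have hau : a = u := by simpa using h2l
        rw [List.append_nil, h1l, hau]
      · rw [List.getLast?_append]
        have ht : t.getLast? = some u := by
          rcases List.exists_cons_of_ne_nil htne with ⟨b, t', rfl⟩
          rwa [List.getLast?_cons_cons] at h2l
        rw [ht]; rfl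
    · simp only [List.length_append, List.length_cons]
      omega
end

section
/- Let V be a type and S a set of edges (elements of Sym2 V). For a set T of edges and edges v, u define L(T,v,u) := sSup {n : ℕ | ∃ edge-simple path l with all edges of l in T, first edge v, last edge u, and l.length = n}. Suppose u ∈ S and there exists an edge-simple path all of whose edges lie in S, with first edge v, last edge u, and length at least 2. Then L(S,v,u) = sSup {n : ℕ | ∃ y ∈ S \ {u} such that y shares a vertex with u, ∃ edge-simple path l with all edges in S \ {u}, first edge v, last edge y, and n = l.length + 1}. -/
theorem L_remove_last_edge {V : Type*} (S : Set (Sym2 V)) (v u : Sym2 V)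
    (hu : u ∈ S)
    (hex : ∃ l : List (Sym2 V), IsTrail l ∧ (∀ e ∈ l, e ∈ S) ∧
      l.head? = some v ∧ l.getLast? = some u ∧ 2 ≤ l.length) :
    L S v u =
      sSup {n : ℕ | ∃ y ∈ S \ {u}, SharesVertex y u ∧
        ∃ l : List (Sym2 V), IsTrail l ∧ (∀ e ∈ l, e ∈ S \ {u}) ∧
          l.head? = some v ∧ l.getLast? = some y ∧ n = l.length + 1} := by
  set A := {n : ℕ | ∃ l : List (Sym2 V), IsTrail l ∧ (∀ e ∈ l, e ∈ S) ∧
    l.head? = some v ∧ l.getLast? = some u ∧ l.length = n} with hA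
  set B := {n : ℕ | ∃ y ∈ S \ {u}, SharesVertex y u ∧
    ∃ l : List (Sym2 V), IsTrail l ∧ (∀ e ∈ l, e ∈ S \ {u}) ∧
      l.head? = some v ∧ l.getLast? = some y ∧ n = l.length + 1} with hB
  -- key equivalence : n ∈ B ↔ n ∈ A ∧ 2 ≤ n
  have key : ∀ n : ℕ, n ∈ B ↔ n ∈ A ∧ 2 ≤ n := by
    intro n
    constructor
    · rintro ⟨y, ⟨hyS, hyu⟩, ⟨x, hxy, hxu⟩, l', ⟨hne, hnd, hch⟩, hmem, hhd, hlast, hn⟩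
      refine ⟨⟨l' ++ [u], ⟨by simp, ?_, ?_⟩, ?_, ?_, ?_, ?_⟩, ?_⟩
      · rw [List.nodup_append]
        refine ⟨hnd, List.nodup_singleton u, ?_⟩
        intro e he b he'
        rcases (hmem e he) with ⟨_, heu⟩
        simp only [List.mem_singleton] at he'
        exact fun h => heu (by simpa [h] using he')
      · unfold List.Chain'; rw [List.isChain_append]
        refine ⟨hch, List.isChain_singleton u, ?_⟩
        intro a ha b hb
        simp only [List.head?_cons, Option.mem_def, Option.some.injEq] at hb
        rw [Option.mem_def, hlast, Option.some.injEq] at ha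
        exact ⟨x, ha ▸ hxy, hb ▸ hxu⟩
      · intro e he
        rcases List.mem_append.1 he with h | h
        · exact (hmem e h).1
        · simp only [List.mem_singleton] at h; rw [h]; exact hu
      · rwa [List.head?_append_of_ne_nil _ hne]
      · exact List.getLast?_concat
      · have : l'.length ≠ 0 := fun h => hne (List.length_eq_zero_iff.1 h)
        simp [hn]
      · have : 1 ≤ l'.length := Nat.one_le_iff_ne_zero.2
          (fun h => hne (List.length_eq_zero_iff.1 h))
        omega
    · rintro ⟨⟨l, ⟨hne, hnd, hch⟩, hmem, hhd, hlast, hn⟩, h2⟩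
      have hul : l.getLast hne = u := by
        have := List.getLast?_eq_getLast hne
        rw [hlast] at this
        exact (Option.some_inj.1 this).symm
      have hdecomp : l.dropLast ++ [u] = l := by
        rw [← hul]; exact List.dropLast_append_getLast hne
      have hlen' : l.dropLast.length = l.length - 1 := List.length_dropLast
      have hne' : l.dropLast ≠ [] := by
        intro h
        have := congrArg List.length h
        simp [hlen'] at this
        omega
      -- u not in dropLast
      have hnd' : (l.dropLast ++ [u]).Nodup := hdecomp.symm ▸ hnd
      rw [List.nodup_append] at hnd'
      obtain ⟨hndd, -, hdisj⟩ := hnd'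
      have hunotin : u ∉ l.dropLast := fun h => hdisj u h u (List.mem_singleton_self u) rfl
      have hch' : (l.dropLast ++ [u]).Chain' (fun e f => ∃ x, x ∈ e ∧ x ∈ f) :=
        hdecomp.symm ▸ hch
      unfold List.Chain' at hch'; rw [List.isChain_append] at hch'
      obtain ⟨hchd, -, hlink⟩ := hch'
      set y := l.dropLast.getLast hne' with hy
      have hylast : l.dropLast.getLast? = some y := List.getLast?_eq_getLast hne'
      have hshare : SharesVertex y u := hlink y hylast u rfl
      have hymem : y ∈ l := (List.dropLast_sublist l).mem (List.getLast_mem hne')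
      refine ⟨y, ⟨hmem y hymem, fun h => hunotin (h ▸ List.getLast_mem hne')⟩, hshare,
        l.dropLast, ⟨hne', hndd, hchd⟩, ?_, ?_, hylast, by omega⟩
      · intro e he
        exact ⟨hmem e ((List.dropLast_sublist l).mem he),
          fun h => hunotin (h ▸ he)⟩
      · rw [← hdecomp] at hhd
        rwa [List.head?_append_of_ne_nil _ hne'] at hhd
  -- from hex, an element of A that is ≥ 2
  obtain ⟨l0, ht0, hm0, hh0, hl0, h20⟩ := hex
  have hmA : l0.length ∈ A := ⟨l0, ht0, hm0, hh0, hl0, rfl⟩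
  have hmB : l0.length ∈ B := (key _).2 ⟨hmA, h20⟩
  have hBsubA : B ⊆ A := fun n hn => ((key n).1 hn).1
  show sSup A = sSup B
  by_cases hbdd : BddAbove A
  · have hbddB : BddAbove B := hbdd.mono hBsubA
    apply le_antisymm
    · have hsA : sSup A ∈ A := Nat.sSup_mem ⟨_, hmA⟩ hbdd
      have h2A : 2 ≤ sSup A := le_trans h20 (le_csSup hbdd hmA)
      exact le_csSup hbddB ((key _).2 ⟨hsA, h2A⟩)
    · exact csSup_le_csSup hbdd ⟨_, hmB⟩ hBsubA
  · have hbddB : ¬ BddAbove B := by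
      intro ⟨N, hN⟩
      apply hbdd
      refine ⟨max N 1, fun n hn => ?_⟩
      by_cases h2 : 2 ≤ n
      · exact le_trans (hN ((key n).2 ⟨hn, h2⟩)) (le_max_left _ _)
      · exact le_trans (by omega) (le_max_right N 1)
    rw [csSup_of_not_bddAbove hbdd, csSup_of_not_bddAbove hbddB]
end

section
/- For all natural numbers t and k with (k : ℝ) ≤ 0.055 * t, Real.sqrt (Nat.choose (4*t) (2*t)) * Real.sqrt (Nat.choose (2*t) t) * Real.sqrt (Nat.choose t k) ≤ 1.728 ^ (4*t). -/
lemma aux_choose_le_two_pow (n k : ℕ) : n.choose k ≤ 2 ^ n := by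
  rcases le_or_gt k n with hk | hk
  · calc n.choose k ≤ ∑ m ∈ Finset.range (n + 1), n.choose m :=
        Finset.single_le_sum (fun i _ => Nat.zero_le _) (Finset.mem_range.mpr (by omega))
      _ = 2 ^ n := Nat.sum_range_choose n
  · simp [Nat.choose_eq_zero_of_lt hk]

lemma aux_choose_mul_pow_le (t k : ℕ) (x : ℝ) (hx : 0 ≤ x) :
    (t.choose k : ℝ) * x ^ k ≤ (x + 1) ^ t := by
  rcases le_or_gt k t with hk | hk
  · rw [add_pow]
    calc (t.choose k : ℝ) * x ^ k = x ^ k * 1 ^ (t - k) * t.choose k := by ring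
      _ ≤ ∑ i ∈ Finset.range (t + 1), x ^ i * 1 ^ (t - i) * t.choose i :=
        Finset.single_le_sum (f := fun i => x ^ i * 1 ^ (t - i) * (t.choose i : ℝ))
          (fun i _ => by positivity) (Finset.mem_range.mpr (by omega))
  · simp only [Nat.choose_eq_zero_of_lt hk, Nat.cast_zero, zero_mul]
    positivity

lemma aux_numeric : ((67.84 : ℝ)) ^ 200 * (50/3) ^ 11 ≤ 1.728 ^ 1600 := by
  rw [show (1600:ℕ) = 8 * 200 from rfl, pow_mul]
  norm_num

theorem sqrt_choose_prod_le_pow_step2 (t k : ℕ) (h : (k : ℝ) ≤ 0.055 * t) :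
    Real.sqrt (Nat.choose (4 * t) (2 * t)) * Real.sqrt (Nat.choose (2 * t) t) *
      Real.sqrt (Nat.choose t k) ≤ 1.728 ^ (4 * t) := by
  have hk : 200 * k ≤ 11 * t := by
    have : (200 * k : ℝ) ≤ 11 * t := by nlinarith
    exact_mod_cast this
  have h1 : (Nat.choose (4 * t) (2 * t) : ℝ) ≤ 2 ^ (4 * t) := by
    exact_mod_cast Nat.cast_le.mpr (aux_choose_le_two_pow (4 * t) (2 * t))
  have h2 : (Nat.choose (2 * t) t : ℝ) ≤ 2 ^ (2 * t) := by
    exact_mod_cast Nat.cast_le.mpr (aux_choose_le_two_pow (2 * t) t)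
  have h3 : (Nat.choose t k : ℝ) ≤ (53 / 50) ^ t * (50 / 3) ^ k := by
    have := aux_choose_mul_pow_le t k (3 / 50) (by norm_num)
    have hpos : (0 : ℝ) < (3 / 50) ^ k := by positivity
    rw [show (3 / 50 : ℝ) + 1 = 53 / 50 by norm_num] at this
    calc (Nat.choose t k : ℝ) = (Nat.choose t k * (3 / 50) ^ k) * (50 / 3) ^ k := by
          rw [mul_assoc, ← mul_pow]; norm_num
      _ ≤ (53 / 50) ^ t * (50 / 3) ^ k :=
          mul_le_mul_of_nonneg_right this (by positivity)
  -- combine square roots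
  have hnn1 : (0 : ℝ) ≤ (Nat.choose (4 * t) (2 * t) : ℝ) := Nat.cast_nonneg _
  have hnn2 : (0 : ℝ) ≤ (Nat.choose (2 * t) t : ℝ) := Nat.cast_nonneg _
  rw [← Real.sqrt_mul hnn1, ← Real.sqrt_mul (by positivity)]
  have key : (Nat.choose (4 * t) (2 * t) : ℝ) * (Nat.choose (2 * t) t) * (Nat.choose t k)
      ≤ (1.728 ^ (4 * t)) ^ 2 := by
    have step : (Nat.choose (4 * t) (2 * t) : ℝ) * (Nat.choose (2 * t) t) * (Nat.choose t k)
        ≤ 67.84 ^ t * (50 / 3) ^ k := by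
      calc (Nat.choose (4 * t) (2 * t) : ℝ) * (Nat.choose (2 * t) t) * (Nat.choose t k)
          ≤ 2 ^ (4 * t) * 2 ^ (2 * t) * ((53 / 50) ^ t * (50 / 3) ^ k) := by
            gcongr
        _ = ((2 : ℝ) ^ 4 * 2 ^ 2 * (53 / 50)) ^ t * (50 / 3) ^ k := by
            rw [pow_mul, pow_mul, mul_pow, mul_pow]; ring
        _ = 67.84 ^ t * (50 / 3) ^ k := by norm_num
    have main : (67.84 : ℝ) ^ t * (50 / 3) ^ k ≤ 1.728 ^ (8 * t) := by
      have h200 : ((67.84 : ℝ) ^ t * (50 / 3) ^ k) ^ 200 ≤ (1.728 ^ (8 * t)) ^ 200 := by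
        rw [mul_pow, ← pow_mul, ← pow_mul, ← pow_mul]
        calc (67.84 : ℝ) ^ (t * 200) * (50 / 3) ^ (k * 200)
            ≤ 67.84 ^ (t * 200) * (50 / 3) ^ (11 * t) :=
              mul_le_mul_of_nonneg_left
                (pow_le_pow_right₀ (by norm_num) (by omega)) (by positivity)
          _ = (67.84 ^ 200 * (50 / 3) ^ 11) ^ t := by
              rw [mul_pow, ← pow_mul, ← pow_mul]; ring_nf
          _ ≤ (1.728 ^ 1600) ^ t := by
              exact pow_le_pow_left₀ (by positivity) aux_numeric t
          _ = 1.728 ^ (8 * t * 200) := by rw [← pow_mul]; ring_nf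
      exact le_of_pow_le_pow_left₀ (by norm_num) (by positivity) h200
    calc (Nat.choose (4 * t) (2 * t) : ℝ) * (Nat.choose (2 * t) t) * (Nat.choose t k)
        ≤ 1.728 ^ (8 * t) := le_trans step main
      _ = (1.728 ^ (4 * t)) ^ 2 := by rw [← pow_mul]; ring_nf
  calc Real.sqrt ((Nat.choose (4 * t) (2 * t) : ℝ) * (Nat.choose (2 * t) t) * (Nat.choose t k))
      ≤ Real.sqrt ((1.728 ^ (4 * t)) ^ 2) := Real.sqrt_le_sqrt key
    _ = 1.728 ^ (4 * t) := Real.sqrt_sq (by positivity)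
end
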